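/- The number of integer solutions to q(x) = 1, where q is the quadratic form of the tree Aₙ, is exactly n(n+1). -/

import Mathlib

/-- The quadratic form of the Coxeter tree `Aₙ`. -/
def qA (n : ℕ) (x : ℕ → ℤ) : ℤ :=
  (∑ i ∈ Finset.range n, (x i)^2) - ∑ i ∈ Finset.range (n-1), x i * x (i+1)

/-- The "padded difference" sequence of `x`. -/
def cedge (x : ℕ → ℤ) (j : ℕ) : ℤ := if j = 0 then -x 0 else x (j-1) - x j

lemma cedge_tel (x : ℕ → ℤ) : ∀ i, ∑ j ∈ Finset.range (i+1), cedge x j = - x i := by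
  intro i
  induction i with
  | zero => simp [cedge]
  | succ i ih =>
    rw [Finset.sum_range_succ, ih]
    simp [cedge]
    ring

lemma sq_sum (x : ℕ → ℤ) : ∀ n, 1 ≤ n →
    ∑ i ∈ Finset.range n, (x i - x (i+1))^2 + x 0 ^ 2
      = 2 * qA n x + x n ^ 2 - 2 * (x (n-1) * x n) := by
  intro n hn
  induction n, hn using Nat.le_induction with
  | base => simp [qA]; ring
  | succ n hn ih =>
    obtain ⟨m, rfl⟩ : ∃ m, n = m + 1 := ⟨n-1, by omega⟩
    have hq : qA (m+1+1) x = qA (m+1) x + x (m+1) ^ 2 - x m * x (m+1) := by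
      unfold qA
      rw [show m + 1 + 1 - 1 = m + 1 from rfl, show m + 1 - 1 = m from rfl,
        Finset.sum_range_succ (fun i => x i ^ 2) (m+1),
        Finset.sum_range_succ (fun i => x i * x (i+1)) m]
      ring
    rw [Finset.sum_range_succ, hq]
    simp only [show m + 1 + 1 - 1 = m + 1 from rfl, show m + 1 - 1 = m from rfl] at *
    linear_combination ih

lemma two_q (x : ℕ → ℤ) (n : ℕ) (hn : 1 ≤ n) (hxn : x n = 0) :
    ∑ j ∈ Finset.range (n+1), (cedge x j)^2 = 2 * qA n x := by
  rw [Finset.sum_range_succ']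
  have h : ∀ i, (cedge x (i+1))^2 = (x i - x (i+1))^2 := by
    intro i; simp [cedge]
  simp only [h]
  rw [show (cedge x 0)^2 = x 0 ^ 2 by simp [cedge]]
  rw [sq_sum x n hn, hxn]
  ring

lemma classify (c : ℕ → ℤ) (m : ℕ) (h1 : ∑ j ∈ Finset.range m, c j = 0)
    (h2 : ∑ j ∈ Finset.range m, (c j)^2 = 2) :
    ∃ a b, a < m ∧ b < m ∧ a ≠ b ∧ c a = 1 ∧ c b = -1 ∧
      ∀ j, j ≠ a → j ≠ b → j < m → c j = 0 := by
  classical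
  set s := (Finset.range m).filter (fun j => c j ≠ 0) with hs
  have hsub : s ⊆ Finset.range m := Finset.filter_subset _ _
  have hsum2 : ∑ j ∈ s, (c j)^2 = 2 := by
    rw [← h2]
    exact Finset.sum_filter_of_ne (fun j _ h => by intro hc; simp [hc] at h)
  have hsum1 : ∑ j ∈ s, c j = 0 := by
    rw [← h1]
    exact Finset.sum_filter_of_ne (fun j _ h => h)
  have hone : ∀ j ∈ s, c j = 1 ∨ c j = -1 := by
    intro j hj
    have hle : (c j)^2 ≤ 2 := by
      rw [← hsum2]
      exact Finset.single_le_sum (fun i _ => sq_nonneg (c i)) hj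
    have hne : c j ≠ 0 := (Finset.mem_filter.mp hj).2
    have h1' : -1 ≤ c j ∧ c j ≤ 1 := by constructor <;> nlinarith
    omega
  have hcard : s.card = 2 := by
    have h : ∑ j ∈ s, (c j)^2 = ∑ _j ∈ s, (1:ℤ) :=
      Finset.sum_congr rfl (fun j hj => by rcases hone j hj with h | h <;> simp [h])
    rw [hsum2, Finset.sum_const, nsmul_eq_mul, mul_one] at h
    exact_mod_cast h.symm
  obtain ⟨a, b, hab, habs⟩ := Finset.card_eq_two.mp hcard
  have has : a ∈ s := by rw [habs]; simp
  have hbs : b ∈ s := by rw [habs]; simp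
  have hsum : c a + c b = 0 := by
    rw [habs, Finset.sum_pair hab] at hsum1; exact hsum1
  have hzero : ∀ j, j ≠ a → j ≠ b → j < m → c j = 0 := by
    intro j hja hjb hjm
    by_contra hc
    have : j ∈ s := Finset.mem_filter.mpr ⟨Finset.mem_range.mpr hjm, hc⟩
    rw [habs] at this
    simp at this
    tauto
  have ham := Finset.mem_range.mp (hsub has)
  have hbm := Finset.mem_range.mp (hsub hbs)
  rcases hone a has with h | h
  · exact ⟨a, b, ham, hbm, hab, h, by omega, hzero⟩
  · exact ⟨b, a, hbm, ham, hab.symm, by omega, h, fun j h1 h2 h3 => hzero j h2 h1 h3⟩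

/-- `±` indicator of the interval `[a, b)`. -/
def Fx (ε : ℤ) (a b : ℕ) : ℕ → ℤ := fun i => if a ≤ i ∧ i < b then ε else 0

lemma qA_Fx (n : ℕ) (ε : ℤ) (a b : ℕ) (hε : ε = 1 ∨ ε = -1) (hab : a < b) (hbn : b ≤ n) :
    qA n (Fx ε a b) = 1 := by
  have hε2 : ε ^ 2 = 1 := by rcases hε with h | h <;> simp [h]
  have h1 : ∑ i ∈ Finset.range n, (Fx ε a b i)^2
      = ((Finset.range n).filter (fun i => a ≤ i ∧ i < b)).card := by
    rw [Finset.sum_congr rfl (g := fun i => if a ≤ i ∧ i < b then (1:ℤ) else 0)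
      (fun i _ => by by_cases h : a ≤ i ∧ i < b <;> simp [Fx, h, hε2])]
    simp [Finset.sum_ite_eq, Finset.sum_boole]
  have hf1 : (Finset.range n).filter (fun i => a ≤ i ∧ i < b) = Finset.Ico a b := by
    ext i; simp [Finset.mem_Ico]; omega
  have h2 : ∑ i ∈ Finset.range (n-1), Fx ε a b i * Fx ε a b (i+1)
      = ((Finset.range (n-1)).filter (fun i => a ≤ i ∧ i + 1 < b)).card := by
    rw [Finset.sum_congr rfl (g := fun i => if a ≤ i ∧ i + 1 < b then (1:ℤ) else 0)
      (fun i _ => by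
        simp only [Fx]
        by_cases h : a ≤ i ∧ i + 1 < b
        · rw [if_pos (show a ≤ i ∧ i < b by omega),
            if_pos (show a ≤ i + 1 ∧ i + 1 < b by omega), if_pos h]
          linear_combination hε2
        · rw [if_neg h]
          by_cases hi : a ≤ i ∧ i < b
          · rw [if_neg (show ¬(a ≤ i + 1 ∧ i + 1 < b) by omega), mul_zero]
          · rw [if_neg hi, zero_mul])]
    simp [Finset.sum_boole]
  have hf2 : (Finset.range (n-1)).filter (fun i => a ≤ i ∧ i + 1 < b) = Finset.Ico a (b-1) := by
    ext i; simp [Finset.mem_Ico]; omega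
  unfold qA
  rw [h1, h2, hf1, hf2, Nat.card_Ico, Nat.card_Ico]
  have h : b - a = (b - 1 - a) + 1 := by omega
  rw [h]
  push_cast
  ring

lemma Fx_inj (ε ε' : ℤ) (a b a' b' : ℕ) (hε : ε ≠ 0) (hε' : ε' ≠ 0) (hab : a < b)
    (hab' : a' < b') (h : Fx ε a b = Fx ε' a' b') : ε = ε' ∧ a = a' ∧ b = b' := by
  have key : ∀ i, (if a ≤ i ∧ i < b then ε else 0) = (if a' ≤ i ∧ i < b' then ε' else 0) :=
    fun i => congrFun h i
  have ha : a = a' := by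
    by_contra hne
    rcases Nat.lt_or_ge a a' with hl | hg
    · have := key a
      rw [if_pos ⟨le_refl a, hab⟩, if_neg (by omega)] at this
      exact hε this
    · have := key a'
      rw [if_neg (by omega), if_pos ⟨le_refl a', hab'⟩] at this
      exact hε' this.symm
  subst ha
  have hb : b = b' := by
    by_contra hne
    rcases Nat.lt_or_ge b b' with hl | hg
    · have := key b
      rw [if_neg (by omega), if_pos (by omega)] at this
      exact hε' this.symm
    · have := key b'
      rw [if_pos (by omega), if_neg (by omega)] at this
      exact hε this
  subst hb
  have := key a
  rw [if_pos ⟨le_refl a, hab⟩, if_pos ⟨le_refl a, hab⟩] at this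
  exact ⟨this, rfl, rfl⟩

theorem qA_card_solutions (n : ℕ) (hn : 1 ≤ n) :
    {x : ℕ → ℤ | (∀ i, n ≤ i → x i = 0) ∧ qA n x = 1}.ncard = n * (n + 1) := by
  classical
  set T : Finset (ℤ × Σ _ : ℕ, ℕ) :=
    ({-1, 1} : Finset ℤ) ×ˢ ((Finset.range (n+1)).sigma fun b => Finset.range b) with hT
  set G : (ℤ × Σ _ : ℕ, ℕ) → (ℕ → ℤ) := fun p => Fx p.1 p.2.2 p.2.1 with hG
  have hmem : ∀ p : ℤ × Σ _ : ℕ, ℕ, p ∈ T ↔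
      (p.1 = -1 ∨ p.1 = 1) ∧ p.2.1 ≤ n ∧ p.2.2 < p.2.1 := by
    intro p
    simp [hT, Finset.mem_product, Finset.mem_sigma, Finset.mem_range, Finset.mem_insert]
  have hSeq : {x : ℕ → ℤ | (∀ i, n ≤ i → x i = 0) ∧ qA n x = 1} = ↑(T.image G) := by
    ext x
    simp only [Set.mem_setOf_eq, Finset.coe_image, Set.mem_image, Finset.mem_coe]
    constructor
    · rintro ⟨hsupp, hq⟩
      have hc1 : ∑ j ∈ Finset.range (n+1), cedge x j = 0 := by
        rw [cedge_tel, hsupp n le_rfl, neg_zero]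
      have hc2 : ∑ j ∈ Finset.range (n+1), (cedge x j)^2 = 2 := by
        rw [two_q x n hn (hsupp n le_rfl), hq]
        norm_num
      obtain ⟨a, b, ham, hbm, hab, hca, hcb, hzero⟩ := classify (cedge x) (n+1) hc1 hc2
      have hx : ∀ i, i < n →
          x i = -((if a ≤ i then (1:ℤ) else 0) + (if b ≤ i then (-1:ℤ) else 0)) := by
        intro i hi
        have htel := cedge_tel x i
        have hsplit : ∑ j ∈ Finset.range (i+1), cedge x j
            = ∑ j ∈ Finset.range (i+1),
                ((if j = a then (1:ℤ) else 0) + (if j = b then (-1:ℤ) else 0)) := by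
          refine Finset.sum_congr rfl (fun j hj => ?_)
          have hj' : j < i + 1 := Finset.mem_range.mp hj
          by_cases hja : j = a
          · subst hja
            rw [if_pos rfl, if_neg hab, hca]; ring
          · by_cases hjb : j = b
            · subst hjb
              rw [if_neg hja, if_pos rfl, hcb]; ring
            · rw [if_neg hja, if_neg hjb, hzero j hja hjb (by omega)]; ring
        rw [hsplit] at htel
        rw [Finset.sum_add_distrib] at htel
        simp only [Finset.sum_ite_eq', Finset.mem_range] at htel
        have h1 : (if a < i + 1 then (1:ℤ) else 0) = (if a ≤ i then (1:ℤ) else 0) := by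
          split_ifs <;> omega
        have h2 : (if b < i + 1 then (-1:ℤ) else 0) = (if b ≤ i then (-1:ℤ) else 0) := by
          split_ifs <;> omega
        rw [h1, h2] at htel
        linarith [htel]
      rcases Nat.lt_or_ge a b with hlt | hge
      · refine ⟨(-1, ⟨b, a⟩), (hmem _).mpr ⟨Or.inl rfl, show b ≤ n by omega, hlt⟩, ?_⟩
        funext i
        show Fx (-1) a b i = x i
        by_cases hi : i < n
        · rw [hx i hi]
          simp only [Fx]
          split_ifs <;> omega
        · rw [hsupp i (by omega)]
          simp only [Fx]
          rw [if_neg (by omega)]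
      · have hgt : b < a := by omega
        refine ⟨(1, ⟨a, b⟩), (hmem _).mpr ⟨Or.inr rfl, show a ≤ n by omega, hgt⟩, ?_⟩
        funext i
        show Fx 1 b a i = x i
        by_cases hi : i < n
        · rw [hx i hi]
          simp only [Fx]
          split_ifs <;> omega
        · rw [hsupp i (by omega)]
          simp only [Fx]
          rw [if_neg (by omega)]
    · rintro ⟨p, hp, rfl⟩
      obtain ⟨hpε, hpn, hpab⟩ := (hmem p).mp hp
      constructor
      · intro i hi
        show Fx p.1 p.2.2 p.2.1 i = 0
        simp only [Fx]
        rw [if_neg (by omega)]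
      · exact qA_Fx n p.1 p.2.2 p.2.1 (Or.symm hpε) hpab hpn
  rw [hSeq, Set.ncard_coe_finset]
  rw [Finset.card_image_of_injOn]
  · have hcard : T.card = 2 * ∑ b ∈ Finset.range (n+1), b := by
      rw [hT, Finset.card_product, Finset.card_sigma,
        show ({-1, 1} : Finset ℤ).card = 2 by decide,
        Finset.sum_congr rfl (fun b _ => Finset.card_range b)]
    rw [hcard, mul_comm, Finset.sum_range_id_mul_two, Nat.succ_sub_one, Nat.mul_comm]
  · rintro ⟨ε, b, a⟩ hp ⟨ε', b', a'⟩ hq' hfe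
    obtain ⟨hε, hbn, hab⟩ := (hmem _).mp (Finset.mem_coe.mp hp)
    obtain ⟨hε', hbn', hab'⟩ := (hmem _).mp (Finset.mem_coe.mp hq')
    dsimp only at hε hbn hab hε' hbn' hab' hfe
    obtain ⟨he, ha, hb⟩ := Fx_inj ε ε' a b a' b'
      (by rcases hε with h | h <;> simp [h]) (by rcases hε' with h | h <;> simp [h])
      hab hab' hfe
    subst he; subst ha; subst hb; rfl
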